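/- Let P = k[x₁,x₂,x₃] be a quadratic Poisson algebra, i.e. {xᵢ,xⱼ} is homogeneous of degree 2 for all i,j. Let Q = k[y₁,y₂,y₃] be a Poisson algebra such that: (1) there exists a pair (i,j) with {yᵢ,yⱼ} = f(y₁,y₂) − r·y₃ for some polynomial f ∈ k[y₁,y₂] which is homogeneous with respect to the grading deg y₁ = deg y₂ = 1, and some nonzero scalar r ∈ k; and (2) for every other pair (k,l) with k < l and (k,l) ≠ (i,j), (k,l) ≠ (j,i), the bracket {y_k,y_l} is a scalar multiple of a single monomial in y₁, y₂, y₃. Then P is not isomorphic to Q as a Poisson algebra. -/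

import Mathlib

open MvPolynomial

/-- A Poisson bracket on a commutative `k`-algebra: a `k`-bilinear antisymmetric operation
satisfying the Jacobi identity and the Leibniz rule. -/
structure PoissonStructure (k : Type*) [CommRing k] (A : Type*) [CommRing A] [Algebra k A] where
  bracket : A → A → A
  add_right : ∀ a b c, bracket a (b + c) = bracket a b + bracket a c
  smul_right : ∀ (r : k) (a b : A), bracket a (r • b) = r • bracket a b
  antisymm : ∀ a b, bracket a b = -bracket b a
  jacobi : ∀ a b c,
    bracket a (bracket b c) + bracket b (bracket c a) + bracket c (bracket a b) = 0
  leibniz : ∀ a b c, bracket a (b * c) = bracket a b * c + b * bracket a c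

/-- A Poisson bracket with one argument fixed is a derivation, so its values lie in any
ideal containing its values on the generators. -/
lemma brk_right_mem {k : Type*} [Field k] (S : PoissonStructure k (MvPolynomial (Fin 3) k))
    (I : Ideal (MvPolynomial (Fin 3) k)) (a : MvPolynomial (Fin 3) k)
    (h : ∀ j, S.bracket a (X j) ∈ I) : ∀ g, S.bracket a g ∈ I := by
  have h1 : S.bracket a 1 = 0 := by
    have := S.leibniz a 1 1
    rw [mul_one, mul_one, one_mul] at this
    simpa using this
  intro g
  induction g using MvPolynomial.induction_on with
  | C c =>
      have hc : (C c : MvPolynomial (Fin 3) k) = c • 1 := by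
        rw [Algebra.smul_def, mul_one]; rfl
      rw [hc, S.smul_right, h1, smul_zero]
      exact I.zero_mem
  | add p q hp hq => rw [S.add_right]; exact I.add_mem hp hq
  | mul_X p j hp =>
      rw [S.leibniz]
      exact I.add_mem (I.mul_mem_right _ hp) (I.mul_mem_left _ (h j))

lemma brk_mem {k : Type*} [Field k] (S : PoissonStructure k (MvPolynomial (Fin 3) k))
    (I : Ideal (MvPolynomial (Fin 3) k))
    (h : ∀ i j, S.bracket (X i) (X j) ∈ I) : ∀ f g, S.bracket f g ∈ I := by
  intro f g
  refine brk_right_mem S I f (fun j => ?_) g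
  rw [S.antisymm]
  exact I.neg_mem (brk_right_mem S I (X j) (fun i => h j i) f)

/-- A homogeneous polynomial of degree 2 lies in the square of the vanishing ideal
of the origin. -/
lemma homog2_mem_sq {k : Type*} [Field k] {p : MvPolynomial (Fin 3) k}
    (hp : p.IsHomogeneous 2) :
    p ∈ (vanishingIdeal k ({0} : Set (Fin 3 → k)) : Ideal (MvPolynomial (Fin 3) k)) ^ 2 := by
  set V : Ideal (MvPolynomial (Fin 3) k) := vanishingIdeal k ({0} : Set (Fin 3 → k)) with hV
  rw [sq]
  rw [p.as_sum]
  refine Ideal.sum_mem _ (fun m hm => ?_)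
  have hdeg : m.degree = 2 := by
    rw [Finsupp.degree_eq_weight_one]
    exact hp (mem_support_iff.mp hm)
  have hm0 : m ≠ 0 := by
    intro h; rw [h, map_zero] at hdeg; exact two_ne_zero hdeg.symm
  obtain ⟨i, hi⟩ := Finsupp.ne_iff.mp hm0
  rw [Finsupp.coe_zero, Pi.zero_apply] at hi
  set m' : Fin 3 →₀ ℕ := m - Finsupp.single i 1 with hm'
  have hsplit : Finsupp.single i 1 + m' = m := by
    ext j
    rw [hm']
    by_cases hj : j = i
    · subst hj
      simp only [Finsupp.add_apply, Finsupp.tsub_apply, Finsupp.single_eq_same]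
      omega
    · simp only [Finsupp.add_apply, Finsupp.tsub_apply,
        Finsupp.single_eq_of_ne hj]
      omega
  have hm'0 : m' ≠ 0 := by
    intro h
    have hms : m = Finsupp.single i 1 := by rw [← hsplit, h, add_zero]
    rw [hms] at hdeg
    simp [Finsupp.degree_single] at hdeg
  have hfactor : (monomial m (coeff m p) : MvPolynomial (Fin 3) k)
      = X i * monomial m' (coeff m p) := by
    rw [X, monomial_mul, hsplit, one_mul]
  rw [hfactor]
  refine Ideal.mul_mem_mul ?_ ?_
  · rw [hV, mem_vanishingIdeal_singleton_iff, aeval_eq_eval]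
    simp
  · rw [hV, mem_vanishingIdeal_singleton_iff, aeval_eq_eval, eval_monomial]
    obtain ⟨j, hj⟩ := Finsupp.ne_iff.mp hm'0
    rw [Finsupp.coe_zero, Pi.zero_apply] at hj
    have hjmem : j ∈ m'.support := Finsupp.mem_support_iff.mpr hj
    rw [Finsupp.prod]
    rw [Finset.prod_eq_zero hjmem (by simp [zero_pow hj])]
    ring

lemma eval_pderiv_of_mem_sq {k : Type*} [Field k] (x : Fin 3 → k)
    {g : MvPolynomial (Fin 3) k}
    (hg : g ∈ (vanishingIdeal k ({x} : Set (Fin 3 → k)) : Ideal (MvPolynomial (Fin 3) k)) ^ 2)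
    (t : Fin 3) : eval x (pderiv t g) = 0 := by
  rw [sq] at hg
  refine Submodule.mul_induction_on hg ?_ ?_
  · intro a ha b hb
    rw [mem_vanishingIdeal_singleton_iff, aeval_eq_eval] at ha hb
    rw [pderiv_mul]
    simp [ha, hb]
  · intro a b ha hb
    rw [map_add, map_add, ha, hb, add_zero]

/-- A quadratic Poisson algebra `P = k[x₁,x₂,x₃]` is not isomorphic, as a Poisson algebra,
to a Poisson algebra `Q = k[y₁,y₂,y₃]` in which some bracket `{yᵢ,yⱼ}` equals
`f(y₁,y₂) − r·y₃` with `f` homogeneous in `y₁,y₂` and `r ≠ 0`, while every other bracket of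
generators is a scalar multiple of a single monomial. -/
theorem stmt_2 {k : Type*} [Field k] [IsAlgClosed k] [CharZero k]
    (P Q : PoissonStructure k (MvPolynomial (Fin 3) k))
    (hP : ∀ i j, (P.bracket (X i) (X j)).IsHomogeneous 2)
    (hQ : ∃ i j : Fin 3, i ≠ j ∧
      (∃ (F : MvPolynomial (Fin 3) k) (r : k) (d : ℕ), r ≠ 0 ∧
        (∀ m ∈ F.support, m 2 = 0) ∧ F.IsHomogeneous d ∧
        Q.bracket (X i) (X j) = F - C r * X 2) ∧
      (∀ a b : Fin 3, a < b → (a, b) ≠ (i, j) → (a, b) ≠ (j, i) →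
        ∃ (s : k) (m : Fin 3 →₀ ℕ), Q.bracket (X a) (X b) = monomial m s)) :
    ¬ ∃ e : MvPolynomial (Fin 3) k ≃ₐ[k] MvPolynomial (Fin 3) k,
        ∀ f g, e (P.bracket f g) = Q.bracket (e f) (e g) := by
  rintro ⟨e, he⟩
  obtain ⟨i, j, hij, ⟨F, r, d, hr, hF2, hFd, hbr⟩, -⟩ := hQ
  set V : Ideal (MvPolynomial (Fin 3) k) := vanishingIdeal k ({0} : Set (Fin 3 → k)) with hV
  -- all P-brackets lie in V²
  have hPV : ∀ f g, P.bracket f g ∈ V ^ 2 :=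
    brk_mem P (V ^ 2) (fun i j => homog2_mem_sq (hP i j))
  -- transport V along e
  set σ : MvPolynomial (Fin 3) k →+* MvPolynomial (Fin 3) k :=
    (e.symm : MvPolynomial (Fin 3) k ≃+* MvPolynomial (Fin 3) k).toRingHom with hσ
  set W : Ideal (MvPolynomial (Fin 3) k) := V.comap σ with hW
  have hWmax : W.IsMaximal :=
    Ideal.comap_isMaximal_of_surjective σ e.symm.surjective
  have hVW : ∀ a ∈ V, e a ∈ W := by
    intro a ha
    rw [hW, Ideal.mem_comap]
    show e.symm (e a) ∈ V
    rw [e.symm_apply_apply]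
    exact ha
  have hmapsq : ∀ z ∈ V ^ 2, e z ∈ W ^ 2 := by
    intro z hz
    rw [sq] at hz ⊢
    refine Submodule.mul_induction_on hz ?_ ?_
    · intro a ha b hb
      rw [map_mul]
      exact Ideal.mul_mem_mul (hVW a ha) (hVW b hb)
    · intro a b ha hb
      rw [map_add]
      exact Ideal.add_mem _ ha hb
  -- the special Q-bracket lies in W²
  have hQW : Q.bracket (X i) (X j) ∈ W ^ 2 := by
    have h1 : Q.bracket (X i) (X j)
        = e (P.bracket (e.symm (X i)) (e.symm (X j))) := by
      rw [he, e.apply_symm_apply, e.apply_symm_apply]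
    rw [h1]
    exact hmapsq _ (hPV _ _)
  -- identify W with the vanishing ideal of a point
  obtain ⟨x, hx⟩ := (MvPolynomial.isMaximal_iff_eq_vanishingIdeal_singleton (I := W)).mp hWmax
  rw [hx] at hQW
  have hz := eval_pderiv_of_mem_sq x hQW 2
  -- compute the derivative
  have hdF : pderiv (2 : Fin 3) F = 0 := by
    conv_lhs => rw [F.as_sum]
    rw [map_sum]
    refine Finset.sum_eq_zero fun m hm => ?_
    rw [pderiv_monomial, hF2 m hm]
    simp
  rw [hbr, map_sub, hdF, zero_sub, pderiv_C_mul, pderiv_X_self, mul_one] at hz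
  rw [map_neg, eval_C, neg_eq_zero] at hz
  exact hr hz
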